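/- Real form of the arctangent series: for real x ≠ 0, with c_m = (1 + 2i/x)^(2m−1), arctan(x) = 2·Σ_{m≥1} (1/(2m−1)) · Im(c_m) / (Re(c_m)² + Im(c_m)²). -/

import Mathlib

open Complex in
theorem arctan_series_real (x : ℝ) (hx : x ≠ 0) :
    HasSum (fun m : ℕ =>
      (1 / (2 * (m : ℝ) + 1)) *
        ((1 + 2 * Complex.I / (x : ℂ)) ^ (2 * m + 1)).im /
          (((1 + 2 * Complex.I / (x : ℂ)) ^ (2 * m + 1)).re ^ 2 +
            ((1 + 2 * Complex.I / (x : ℂ)) ^ (2 * m + 1)).im ^ 2))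
      (Real.arctan x / 2) := by
  have hxC : (x : ℂ) ≠ 0 := Complex.ofReal_ne_zero.mpr hx
  have hx2 : (x : ℂ) + 2 * I ≠ 0 := by
    intro h
    have := congrArg Complex.im h
    simp at this
  set z0 : ℂ := 1 + 2 * I / (x : ℂ) with hz0
  set w : ℂ := (x : ℂ) / ((x : ℂ) + 2 * I) with hw
  have hmul : z0 * w = 1 := by
    rw [hw, hz0]
    field_simp
  have hwz : w = z0⁻¹ := (inv_eq_of_mul_eq_one_right hmul).symm
  have hnormsq : Complex.normSq w = x ^ 2 / (x ^ 2 + 4) := by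
    rw [hw, Complex.normSq_div]
    simp [Complex.normSq_apply]
    ring
  have hnw : ‖w‖ < 1 := by
    rw [show (1:ℝ) = Real.sqrt 1 by simp, Complex.norm_def]
    apply Real.sqrt_lt_sqrt (Complex.normSq_nonneg _)
    rw [hnormsq, div_lt_one (by positivity)]
    nlinarith [sq_nonneg x]
  have hnorm : ‖-I * w‖ < 1 := by
    rwa [norm_mul, norm_neg, Complex.norm_I, one_mul]
  have h0 := (Complex.hasSum_arctan hnorm).mul_left I
  have him := (Complex.hasSum_im h0).neg
  have hfin : Real.arctan x / 2 = -(I * Complex.arctan (-I * w)).im := by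
    have harctan : I * Complex.arctan (-I * w) = (1/2 : ℂ) * Complex.log (1 - I * x) := by
      rw [Complex.arctan]
      have h1 : (1 + -I * w * I) = 1 + w := by
        rw [show (1 + -I * w * I) = 1 + -(I*I) * w by ring, Complex.I_mul_I]; ring
      have h2 : (1 - -I * w * I) = 1 - w := by
        rw [show (1 - -I * w * I) = 1 + (I*I) * w by ring, Complex.I_mul_I]; ring
      have h3 : (1 + w) / (1 - w) = 1 - I * x := by
        have hww : (1:ℂ) - w = 2*I / ((x:ℂ) + 2*I) := by
          rw [hw]; field_simp; ring
        rw [div_eq_iff (by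
          rw [hww]
          exact div_ne_zero (by simp [Complex.I_ne_zero]) hx2)]
        rw [hww, hw]
        field_simp
        rw [show 2 * I * (1 - (x:ℂ) * I) = 2*I - 2*(I*I)*x by ring, Complex.I_mul_I]
        ring
      rw [h1, h2, h3]
      rw [show -I / 2 = -(I/2) by ring]
      rw [show I * (-(I/2) * Complex.log (1 - I * x)) = -(I*I) * ((1/2) * Complex.log (1 - I * x)) by ring,
        Complex.I_mul_I]
      ring
    rw [harctan]
    have h5 : ((1/2 : ℂ) * Complex.log (1 - I * x)).im = (Complex.log (1 - I * x)).im / 2 := by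
      simp [Complex.mul_im]
      ring
    rw [h5, Complex.log_im]
    rw [Complex.arg_of_re_nonneg (by simp)]
    have him' : (1 - I * (x:ℂ)).im = -x := by simp
    rw [him', Complex.norm_def]
    have hns : Complex.normSq (1 - I * x) = 1 + x ^ 2 := by
      simp [Complex.normSq_apply]; ring
    rw [hns, Real.arctan_eq_arcsin]
    rw [show -x / Real.sqrt (1 + x^2) = -(x / Real.sqrt (1 + x^2)) by ring, Real.arcsin_neg]
    ring
  rw [hfin]
  convert him using 1
  · rfl
  funext n
  have hI2 : ((-1:ℂ)^n * (-1)^n) = 1 := by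
    rw [← pow_add, ← two_mul, pow_mul, neg_one_sq, one_pow]
  have hpow : (-I:ℂ) ^ (2*n+1) = (-1)^n * -I := by
    rw [pow_succ, pow_mul, neg_sq, I_sq]
  have hterm : I * ((-1:ℂ)^n * (-I*w)^(2*n+1) / ((2*n+1:ℕ):ℂ)) = w^(2*n+1) / ((2*n+1:ℕ):ℂ) := by
    rw [mul_pow, hpow]
    rw [show I * ((-1:ℂ)^n * ((-1)^n * -I * w^(2*n+1)) / ((2*n+1:ℕ):ℂ))
        = ((-1:ℂ)^n * (-1)^n) * (-(I*I)) * w^(2*n+1) / ((2*n+1:ℕ):ℂ) by ring,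
      hI2, Complex.I_mul_I]
    ring
  rw [hterm, hwz, inv_pow, Complex.div_natCast_im, Complex.inv_im, Complex.normSq_apply]
  push_cast
  ring
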